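/- arXiv:0911.5702 — 4 statements merged into one kernel-verified Lean document; each statement's English description precedes it below -/
import Mathlib

section
/- For any real p > 2 and all real numbers x, y: | x·|x|^{p−2} − y·|y|^{p−2} | ≤ max{1, (p−1)/2} · |x − y| · ( |x|^{p−2} + |y|^{p−2} ). -/
open Real Set

private lemma self_mul_rpow {a q : ℝ} (ha : 0 ≤ a) (h : 1 + q ≠ 0) :
    a * a ^ q = a ^ (1 + q) := by
  rw [Real.rpow_add' ha h, Real.rpow_one]

/-- Tangent-line (Bernoulli) inequality: for `1 ≤ m` and `0 ≤ b ≤ a`,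
`a^m - b^m ≤ m * a^(m-1) * (a - b)`. -/
private lemma bern {m a b : ℝ} (hm : 1 ≤ m) (hb : 0 ≤ b) (hba : b ≤ a) :
    a ^ m - b ^ m ≤ m * a ^ (m - 1) * (a - b) := by
  have ha : 0 ≤ a := hb.trans hba
  rcases eq_or_lt_of_le ha with h | ha
  · have hb0 : b = 0 := le_antisymm (hba.trans h.symm.le) hb
    have h0 : (0:ℝ) ^ m = 0 := Real.zero_rpow (by linarith)
    simp [← h, hb0, h0]
  · have hs : -1 ≤ b / a - 1 := by
      have : 0 ≤ b / a := div_nonneg hb ha.le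
      linarith
    have key := one_add_mul_self_le_rpow_one_add hs hm
    rw [show 1 + (b / a - 1) = b / a by ring] at key
    rw [Real.div_rpow hb ha.le] at key
    -- key : 1 + m * (b/a - 1) ≤ b^m / a^m
    have hapos : (0:ℝ) < a ^ m := Real.rpow_pos_of_pos ha m
    have key2 : a ^ m * (1 + m * (b / a - 1)) ≤ b ^ m := by
      rw [mul_comm]
      exact (le_div_iff₀ hapos).mp key
    have ham : a ^ m = a ^ (m - 1) * a := by
      rw [mul_comm, self_mul_rpow ha.le (by intro h; nlinarith)]
      congr 1; ring
    have : a ^ m * (1 + m * (b / a - 1)) = a ^ m + m * a ^ (m-1) * (b - a) := by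
      field_simp
      rw [ham]
      ring
    nlinarith [key2]

/-- Same-sign case for `p ≥ 3` via a monotonicity (derivative) argument. -/
private lemma trap {p a b : ℝ} (hp : 3 ≤ p) (hb : 0 ≤ b) (hba : b ≤ a) :
    a ^ (p - 1) - b ^ (p - 1) ≤ (p - 1) / 2 * (a - b) * (a ^ (p - 2) + b ^ (p - 2)) := by
  set g : ℝ → ℝ := fun t => (p - 1) / 2 * (t - b) * (t ^ (p - 2) + b ^ (p - 2)) - t ^ (p - 1)
    with hg
  have hderiv : ∀ t : ℝ, HasDerivAt g
      ((p - 1) / 2 * 1 * (t ^ (p - 2) + b ^ (p - 2))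
        + (p - 1) / 2 * (t - b) * ((p - 2) * t ^ (p - 2 - 1))
        - (p - 1) * t ^ (p - 1 - 1)) t := by
    intro t
    have h1 : HasDerivAt (fun t : ℝ => (p - 1) / 2 * (t - b)) ((p - 1) / 2 * 1) t :=
      ((hasDerivAt_id t).sub_const b).const_mul _
    have h2 : HasDerivAt (fun t : ℝ => t ^ (p - 2) + b ^ (p - 2))
        ((p - 2) * t ^ (p - 2 - 1)) t :=
      (Real.hasDerivAt_rpow_const (Or.inr (by linarith))).add_const _
    have h3 : HasDerivAt (fun t : ℝ => t ^ (p - 1)) ((p - 1) * t ^ (p - 1 - 1)) t :=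
      Real.hasDerivAt_rpow_const (Or.inr (by linarith))
    exact (h1.mul h2).sub h3
  have mono : MonotoneOn g (Ici b) := by
    apply monotoneOn_of_deriv_nonneg (convex_Ici b)
    · exact fun t _ => (hderiv t).continuousAt.continuousWithinAt
    · exact fun t _ => ((hderiv t).differentiableAt).differentiableWithinAt
    · intro t ht
      rw [interior_Ici] at ht
      have htb : b < t := ht
      have ht0 : 0 ≤ t := le_of_lt (lt_of_le_of_lt hb htb)
      rw [(hderiv t).deriv]
      have hB : t ^ (p - 2) - b ^ (p - 2) ≤ (p - 2) * t ^ (p - 2 - 1) * (t - b) := by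
        have := bern (m := p - 2) (a := t) (b := b) (by linarith) hb htb.le
        rwa [show p - 2 - 1 = p - 2 - 1 from rfl] at this
      have he : t ^ (p - 1 - 1) = t ^ (p - 2) := by congr 1; ring
      rw [he]
      nlinarith [hB, Real.rpow_nonneg ht0 (p-2), Real.rpow_nonneg hb (p-2)]
  have hgb : g b = - b ^ (p - 1) := by simp [hg]
  have := mono (self_mem_Ici) (show a ∈ Ici b from hba) hba
  rw [hgb] at this
  simp only [hg] at this
  linarith

/-- Same-sign case for `2 < p ≤ 3`, with constant 1. -/
private lemma samesmall {p a b : ℝ} (hp2 : 2 < p) (hp3 : p ≤ 3) (hb : 0 ≤ b) (hba : b ≤ a) :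
    a ^ (p - 1) - b ^ (p - 1) ≤ (a - b) * (a ^ (p - 2) + b ^ (p - 2)) := by
  have ha : 0 ≤ a := hb.trans hba
  have ea : a = a ^ (3 - p) * a ^ (p - 2) := by
    rw [← Real.rpow_add' ha (by norm_num)]
    norm_num
  have eb : b = b ^ (3 - p) * b ^ (p - 2) := by
    rw [← Real.rpow_add' hb (by norm_num)]
    norm_num
  have ea1 : a * a ^ (p - 2) = a ^ (p - 1) := by
    rw [self_mul_rpow ha (by intro h; nlinarith)]
    congr 1; ring
  have eb1 : b * b ^ (p - 2) = b ^ (p - 1) := by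
    rw [self_mul_rpow hb (by intro h; nlinarith)]
    congr 1; ring
  have hmono : b ^ (3 - p) ≤ a ^ (3 - p) := Real.rpow_le_rpow hb hba (by linarith)
  have hkey : b * a ^ (p - 2) ≤ a * b ^ (p - 2) := by
    calc b * a ^ (p - 2) = b ^ (3 - p) * b ^ (p - 2) * a ^ (p - 2) := by rw [← eb]
      _ ≤ a ^ (3 - p) * b ^ (p - 2) * a ^ (p - 2) := by
          apply mul_le_mul_of_nonneg_right _ (Real.rpow_nonneg ha _)
          exact mul_le_mul_of_nonneg_right hmono (Real.rpow_nonneg hb _)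
      _ = a ^ (3 - p) * a ^ (p - 2) * b ^ (p - 2) := by ring
      _ = a * b ^ (p - 2) := by rw [← ea]
  nlinarith [ea1, eb1, hkey]

/-- Same-sign case, combined. -/
private lemma same {p a b : ℝ} (hp : 2 < p) (hb : 0 ≤ b) (hba : b ≤ a) :
    a ^ (p - 1) - b ^ (p - 1) ≤
      max 1 ((p - 1) / 2) * (a - b) * (a ^ (p - 2) + b ^ (p - 2)) := by
  have ha : 0 ≤ a := hb.trans hba
  have hS : 0 ≤ a ^ (p - 2) + b ^ (p - 2) :=
    add_nonneg (Real.rpow_nonneg ha _) (Real.rpow_nonneg hb _)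
  rcases le_total p 3 with h | h
  · have h1 := samesmall hp h hb hba
    have : (a - b) * (a ^ (p - 2) + b ^ (p - 2)) ≤
        max 1 ((p - 1) / 2) * ((a - b) * (a ^ (p - 2) + b ^ (p - 2))) := by
      nlinarith [le_max_left (1:ℝ) ((p-1)/2), mul_nonneg (sub_nonneg.2 hba) hS]
    linarith [this, h1]
  · have hmax : max 1 ((p - 1) / 2) = (p - 1) / 2 := max_eq_right (by linarith)
    rw [hmax]
    exact trap h hb hba

/-- Opposite-sign case. -/
private lemma opp {p a b : ℝ} (hp : 2 < p) (ha : 0 ≤ a) (hb : 0 ≤ b) :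
    a ^ (p - 1) + b ^ (p - 1) ≤
      max 1 ((p - 1) / 2) * (a + b) * (a ^ (p - 2) + b ^ (p - 2)) := by
  have ea1 : a * a ^ (p - 2) = a ^ (p - 1) := by
    rw [self_mul_rpow ha (by intro h; nlinarith)]
    congr 1; ring
  have eb1 : b * b ^ (p - 2) = b ^ (p - 1) := by
    rw [self_mul_rpow hb (by intro h; nlinarith)]
    congr 1; ring
  have h1 : a ^ (p - 1) + b ^ (p - 1) ≤ (a + b) * (a ^ (p - 2) + b ^ (p - 2)) := by
    nlinarith [mul_nonneg ha (Real.rpow_nonneg hb (p-2)),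
      mul_nonneg hb (Real.rpow_nonneg ha (p-2))]
  have hS : 0 ≤ (a + b) * (a ^ (p - 2) + b ^ (p - 2)) :=
    mul_nonneg (add_nonneg ha hb)
      (add_nonneg (Real.rpow_nonneg ha _) (Real.rpow_nonneg hb _))
  nlinarith [le_max_left (1:ℝ) ((p-1)/2), h1, hS]

/-- Main inequality, assuming `|y| ≤ x`. -/
private lemma main_aux (p : ℝ) (hp : 2 < p) (x y : ℝ) (hy : |y| ≤ x) :
    |x * |x| ^ (p - 2) - y * |y| ^ (p - 2)| ≤
      max 1 ((p - 1) / 2) * |x - y| * (|x| ^ (p - 2) + |y| ^ (p - 2)) := by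
  have hx : 0 ≤ x := (abs_nonneg y).trans hy
  have ea1 : x * x ^ (p - 2) = x ^ (p - 1) := by
    rw [self_mul_rpow hx (by intro h; nlinarith)]
    congr 1; ring
  rcases le_or_gt 0 y with hy0 | hy0
  · -- 0 ≤ y ≤ x
    have hyx : y ≤ x := (le_abs_self y).trans hy
    have eb1 : y * y ^ (p - 2) = y ^ (p - 1) := by
      rw [self_mul_rpow hy0 (by intro h; nlinarith)]
      congr 1; ring
    rw [abs_of_nonneg hx, abs_of_nonneg hy0, abs_of_nonneg (sub_nonneg.2 hyx),
      ea1, eb1]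
    rw [abs_of_nonneg (sub_nonneg.2 (Real.rpow_le_rpow hy0 hyx (by linarith)))]
    exact same hp hy0 hyx
  · -- y < 0
    set b := -y with hbdef
    have hb : 0 ≤ b := by simp [hbdef]; linarith
    have hay : |y| = b := abs_of_neg hy0
    have eb1 : b * b ^ (p - 2) = b ^ (p - 1) := by
      rw [self_mul_rpow hb (by intro h; nlinarith)]
      congr 1; ring
    rw [abs_of_nonneg hx, hay]
    have e2 : x * x ^ (p - 2) - y * b ^ (p - 2) = x ^ (p - 1) + b ^ (p - 1) := by
      rw [ea1, ← eb1]; simp [hbdef]; ring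
    rw [e2]
    have hxy : |x - y| = x + b := by
      rw [abs_of_nonneg (by linarith), hbdef]; ring
    rw [hxy]
    rw [abs_of_nonneg (add_nonneg (Real.rpow_nonneg hx _) (Real.rpow_nonneg hb _))]
    exact opp hp hx hb

/-- Main inequality, assuming `|y| ≤ |x|`. -/
private lemma main_aux2 (p : ℝ) (hp : 2 < p) (x y : ℝ) (hy : |y| ≤ |x|) :
    |x * |x| ^ (p - 2) - y * |y| ^ (p - 2)| ≤
      max 1 ((p - 1) / 2) * |x - y| * (|x| ^ (p - 2) + |y| ^ (p - 2)) := by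
  rcases le_or_gt 0 x with hx | hx
  · exact main_aux p hp x y (by rwa [abs_of_nonneg hx] at hy)
  · have h' : |(-y)| ≤ -x := by rw [abs_neg]; rwa [abs_of_neg hx] at hy
    have key := main_aux p hp (-x) (-y) h'
    rw [abs_neg, abs_neg] at key
    rw [show -x * |x| ^ (p - 2) - -y * |y| ^ (p - 2)
        = -(x * |x| ^ (p - 2) - y * |y| ^ (p - 2)) by ring, abs_neg,
      show -x - -y = -(x - y) by ring, abs_neg] at key
    exact key

/-- **A technical inequality** (Lemma 5.4). For `p > 2` and all reals `x, y`,
`|x|x|^{p-2} - y|y|^{p-2}| ≤ max{1, (p-1)/2} · |x-y| · (|x|^{p-2} + |y|^{p-2})`. -/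
theorem stmt12 (p : ℝ) (hp : 2 < p) (x y : ℝ) :
    |x * |x| ^ (p - 2) - y * |y| ^ (p - 2)| ≤
      max 1 ((p - 1) / 2) * |x - y| * (|x| ^ (p - 2) + |y| ^ (p - 2)) := by
  rcases le_total (|y|) (|x|) with h | h
  · exact main_aux2 p hp x y h
  · have key := main_aux2 p hp y x h
    rw [abs_sub_comm y x, abs_sub_comm (y * |y| ^ (p - 2)) (x * |x| ^ (p - 2)),
      add_comm (|y| ^ (p - 2)) (|x| ^ (p - 2))] at key
    exact key
end

section
/- Let β > 1 and a, b ≥ 0 be real numbers. If y ≥ 0 satisfies y^β ≤ a + b·y, then y^{β−1} ≤ a^{(β−1)/β} + b. -/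
/-- **A technical inequality** (Lemma 5.5). If `β > 1`, `a, b ≥ 0` and `y ≥ 0` satisfies
`y^β ≤ a + b y`, then `y^{β-1} ≤ a^{(β-1)/β} + b`. -/
theorem stmt13 (β a b y : ℝ) (hβ : 1 < β) (ha : 0 ≤ a) (hb : 0 ≤ b) (hy : 0 ≤ y)
    (h : y ^ β ≤ a + b * y) :
    y ^ (β - 1) ≤ a ^ ((β - 1) / β) + b := by
  have hβ0 : (0:ℝ) < β := by linarith
  have hb1 : β - 1 ≠ 0 := by linarith
  have hane : 0 ≤ a ^ ((β - 1) / β) := Real.rpow_nonneg ha _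
  rcases hy.eq_or_lt with rfl | hy0
  · rw [Real.zero_rpow hb1]; linarith
  rcases le_or_gt y (a ^ (1/β)) with hle | hgt
  · have h1 : y ^ (β - 1) ≤ (a ^ (1/β)) ^ (β - 1) :=
      Real.rpow_le_rpow hy hle (by linarith)
    have h2 : (a ^ (1/β)) ^ (β - 1) = a ^ ((β - 1) / β) := by
      rw [← Real.rpow_mul ha]
      congr 1
      field_simp
    rw [h2] at h1
    linarith
  · -- a ≤ y * a^((β-1)/β)
    have key : a ≤ y * a ^ ((β - 1) / β) := by
      have := mul_le_mul_of_nonneg_right hgt.le hane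
      calc a = a ^ (1/β + (β-1)/β) := by
              rw [show 1/β + (β-1)/β = 1 by field_simp; ring, Real.rpow_one]
        _ = a ^ (1/β) * a ^ ((β-1)/β) := by
              rw [Real.rpow_add' ha]
              rw [show 1/β + (β-1)/β = 1 by field_simp; ring]; norm_num
        _ ≤ y * a ^ ((β-1)/β) := this
    have hsplit : y ^ β = y * y ^ (β - 1) := by
      rw [← Real.rpow_one_add' hy (by linarith : 1 + (β-1) ≠ 0)]
      ring_nf
    have : y * y ^ (β - 1) ≤ y * (a ^ ((β - 1) / β) + b) := by
      rw [← hsplit]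
      calc y ^ β ≤ a + b * y := h
        _ ≤ y * a ^ ((β-1)/β) + b * y := by linarith
        _ = y * (a ^ ((β-1)/β) + b) := by ring
    exact le_of_mul_le_mul_left this hy0
end

section
/- Let Y, Y_1, …, Y_m be i.i.d. real random variables with mean zero and E[Y^{2q}] < ∞ for some integer q > 1, and let S_m = Y_1 + ⋯ + Y_m. Then there exist constants A_q and B_q depending only on q such that E[S_m^{2q}] ≤ A_q · m^q · (E[Y²])^q + B_q · m · E[Y^{2q}]. -/
open MeasureTheory ProbabilityTheory

open Finset
open scoped ENNReal NNReal

lemma lint_interp (F : Measure ℝ) (q c : ℕ) (hq : 1 < q) (h2 : 2 ≤ c) (hc : c ≤ 2 * q) :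
    (∫⁻ x, (‖x‖₊ : ℝ≥0∞) ^ c ∂F) ^ (2 * q - 2) ≤
      (∫⁻ x, (‖x‖₊ : ℝ≥0∞) ^ 2 ∂F) ^ (2 * q - c) *
        (∫⁻ x, (‖x‖₊ : ℝ≥0∞) ^ (2 * q) ∂F) ^ (c - 2) := by
  set n := 2 * q with hn
  rcases eq_or_lt_of_le h2 with h2' | h2'
  · simp [← h2']
  rcases eq_or_lt_of_le hc with hc' | hc'
  · simp [hc']
  have hn2 : (2 : ℕ) < n := by omega
  set p : ℝ := ((n : ℝ) - 2) / ((n : ℝ) - c) with hp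
  set p' : ℝ := ((n : ℝ) - 2) / ((c : ℝ) - 2) with hp'
  have hcn : (c : ℝ) < (n : ℝ) := by exact_mod_cast hc'
  have h2c : (2 : ℝ) < (c : ℝ) := by exact_mod_cast h2'
  have hA : ((n : ℝ) - 2) ≠ 0 := by linarith
  have hB : ((n : ℝ) - c) ≠ 0 := by linarith
  have hC : ((c : ℝ) - 2) ≠ 0 := by linarith
  have hpq : p.HolderConjugate p' := by
    constructor
    · rw [inv_one, hp, hp', inv_div, inv_div, ← add_div]
      rw [div_eq_one_iff_eq hA]; ring
    · rw [hp]; exact div_pos (by linarith) (by linarith)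
    · rw [hp']; exact div_pos (by linarith) (by linarith)
  have hmono : Measurable fun x : ℝ => (‖x‖₊ : ℝ≥0∞) := measurable_nnnorm.coe_nnreal_ennreal
  have key := ENNReal.lintegral_mul_le_Lp_mul_Lq F hpq
    (f := fun x : ℝ => (‖x‖₊ : ℝ≥0∞) ^ ((2 : ℝ) / p))
    (g := fun x : ℝ => (‖x‖₊ : ℝ≥0∞) ^ ((n : ℝ) / p'))
    (hmono.pow_const _).aemeasurable (hmono.pow_const _).aemeasurable
  have hp0 : p ≠ 0 := ne_of_gt hpq.pos
  have hp'0 : p' ≠ 0 := ne_of_gt hpq.symm.pos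
  have e1 : ∀ x : ℝ, ((fun x : ℝ => (‖x‖₊ : ℝ≥0∞) ^ ((2:ℝ)/p)) * fun x : ℝ => (‖x‖₊ : ℝ≥0∞) ^ ((n:ℝ)/p')) x
      = (‖x‖₊ : ℝ≥0∞) ^ c := by
    intro x
    simp only [Pi.mul_apply]
    rw [← ENNReal.rpow_add_of_nonneg _ _ (div_nonneg (by norm_num) hpq.nonneg)
      (div_nonneg (Nat.cast_nonneg n) hpq.symm.nonneg), ← ENNReal.rpow_natCast]
    congr 1
    rw [hp, hp']
    field_simp
    ring
  have e2 : ∀ x : ℝ, ((‖x‖₊ : ℝ≥0∞) ^ ((2:ℝ)/p)) ^ p = (‖x‖₊ : ℝ≥0∞) ^ (2:ℕ) := by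
    intro x
    rw [← ENNReal.rpow_natCast _ 2, ← ENNReal.rpow_mul]
    congr 1
    rw [hp]
    field_simp
    norm_num
  have e3 : ∀ x : ℝ, ((‖x‖₊ : ℝ≥0∞) ^ ((n:ℝ)/p')) ^ p' = (‖x‖₊ : ℝ≥0∞) ^ (n:ℕ) := by
    intro x
    rw [← ENNReal.rpow_natCast _ n, ← ENNReal.rpow_mul]
    congr 1
    rw [hp']
    field_simp
  simp only [e1] at key
  simp only [e2, e3] at key
  calc (∫⁻ x, (‖x‖₊ : ℝ≥0∞) ^ c ∂F) ^ (n - 2)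
      ≤ ((∫⁻ x, (‖x‖₊ : ℝ≥0∞) ^ (2:ℕ) ∂F) ^ (1/p) * (∫⁻ x, (‖x‖₊ : ℝ≥0∞) ^ (n:ℕ) ∂F) ^ (1/p')) ^ (n-2) :=
        pow_le_pow_left' key _
    _ = (∫⁻ x, (‖x‖₊ : ℝ≥0∞) ^ (2:ℕ) ∂F) ^ (n - c) * (∫⁻ x, (‖x‖₊ : ℝ≥0∞) ^ (n:ℕ) ∂F) ^ (c - 2) := by
        rw [mul_pow, ← ENNReal.rpow_natCast (_ ^ (1/p)) (n-2), ← ENNReal.rpow_natCast (_ ^ (1/p')) (n-2),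
          ← ENNReal.rpow_mul, ← ENNReal.rpow_mul]
        have k1 : (1/p) * ((n - 2 : ℕ) : ℝ) = ((n - c : ℕ) : ℝ) := by
          rw [Nat.cast_sub (by omega), Nat.cast_sub (by omega), hp]
          field_simp
          norm_num
        have k2 : (1/p') * ((n - 2 : ℕ) : ℝ) = ((c - 2 : ℕ) : ℝ) := by
          rw [Nat.cast_sub (by omega), Nat.cast_sub (by omega), hp']
          field_simp
          push_cast
          ring
        rw [k1, k2, ENNReal.rpow_natCast, ENNReal.rpow_natCast]

lemma prod_integrable {Ω : Type} [MeasurableSpace Ω] (P : Measure Ω) [IsProbabilityMeasure P]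
    {m : ℕ} (Z : Fin m → Ω → ℝ) (hmes : ∀ i, Measurable (Z i))
    (hind : iIndepFun Z P) (hint : ∀ i, Integrable (Z i) P)
    (s : Finset (Fin m)) :
    Integrable (fun ω => ∏ i ∈ s, Z i ω) P ∧
      ∫ ω, ∏ i ∈ s, Z i ω ∂P = ∏ i ∈ s, ∫ ω, Z i ω ∂P := by
  classical
  induction s using Finset.induction_on with
  | empty => simp
  | insert _ _ ha =>
    rename_i a s ih
    have hip : IndepFun (∏ j ∈ s, Z j) (Z a) P :=
      hind.indepFun_finsetProd_of_notMem hmes ha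
    have hps : (∏ j ∈ s, Z j) = fun ω => ∏ j ∈ s, Z j ω := by
      funext ω; simp [Finset.prod_apply]
    rw [hps] at hip
    have hintp : Integrable ((fun ω => ∏ j ∈ s, Z j ω) * Z a) P :=
      hip.integrable_mul ih.1 (hint a)
    constructor
    · have : (fun ω => ∏ i ∈ insert a s, Z i ω) = (fun ω => ∏ j ∈ s, Z j ω) * Z a := by
        funext ω; simp [Finset.prod_insert ha, mul_comm]
      rw [this]; exact hintp
    · have e : (fun ω => ∏ i ∈ insert a s, Z i ω) = fun ω => (∏ j ∈ s, Z j ω) * Z a ω := by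
        funext ω; simp [Finset.prod_insert ha, mul_comm]
      have e2 : (fun ω => (∏ j ∈ s, Z j ω) * Z a ω) = (fun ω => ∏ j ∈ s, Z j ω) * Z a := rfl
      rw [e, e2, hip.integral_mul_eq_mul_integral ih.1.aestronglyMeasurable (hint a).aestronglyMeasurable, Finset.prod_insert ha, ih.2]
      ring

/-- **Moment bound for sums of i.i.d. centered random variables** (Lemma 6.1).
For every integer `q > 1` there are constants `A_q, B_q` depending only on `q` such that
for any i.i.d. mean-zero `Y_1, …, Y_m` with `E[Y^{2q}] < ∞`,
`E[S_m^{2q}] ≤ A_q m^q (E[Y²])^q + B_q m E[Y^{2q}]`. -/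
theorem stmt17 (q : ℕ) (hq : 1 < q) :
    ∃ A B : ℝ, ∀ (Ω : Type) (_ : MeasurableSpace Ω) (P : Measure Ω)
      (_ : IsProbabilityMeasure P) (m : ℕ) (Y : Fin m → Ω → ℝ)
      (F : Measure ℝ),
      (∀ i, Measurable (Y i)) →
      iIndepFun Y P →
      (∀ i, Measure.map (Y i) P = F) →
      (∫ x, x ∂F) = 0 →
      Integrable (fun x : ℝ => x ^ (2 * q)) F →
      ∫ ω, (∑ i, Y i ω) ^ (2 * q) ∂P ≤
        A * (m : ℝ) ^ q * (∫ x, x ^ 2 ∂F) ^ q + B * (m : ℝ) * ∫ x, x ^ (2 * q) ∂F := by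
  classical
  refine ⟨(q : ℝ) ^ (2 * q + 1), (q : ℝ) ^ (2 * q + 1), ?_⟩
  intro Ω mΩ P hP m Y F hYm hind hmap hmean hintF
  set n := 2 * q with hn
  have hn0 : 0 < n := by omega
  rcases Nat.eq_zero_or_pos m with hm0 | hm
  · subst hm0
    simp only [Finset.univ_eq_empty, Finset.sum_empty, Nat.cast_zero]
    rw [zero_pow (by omega : n ≠ 0), zero_pow (by omega : q ≠ 0)]
    simp
  haveI hF : IsProbabilityMeasure F := by
    rw [← hmap ⟨0, hm⟩]
    exact Measure.isProbabilityMeasure_map (hYm _).aemeasurable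
  -- basic integrability over F
  have hxn_nonneg : ∀ x : ℝ, (0 : ℝ) ≤ x ^ n := by
    intro x; rw [hn, mul_comm, pow_mul]; positivity
  have habs_le : ∀ c : ℕ, c ≤ n → ∀ x : ℝ, |x| ^ c ≤ 1 + x ^ n := by
    intro c hc x
    rcases le_total |x| 1 with h | h
    · calc |x| ^ c ≤ 1 := pow_le_one₀ (abs_nonneg x) h
        _ ≤ 1 + x ^ n := le_add_of_nonneg_right (hxn_nonneg x)
    · calc |x| ^ c ≤ |x| ^ n := pow_le_pow_right₀ h hc
        _ = |x ^ n| := (abs_pow x n).symm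
        _ = x ^ n := abs_of_nonneg (hxn_nonneg x)
        _ ≤ 1 + x ^ n := by linarith
  have hFabs : ∀ c ≤ n, Integrable (fun x : ℝ => |x| ^ c) F := by
    intro c hc
    refine ((integrable_const (1 : ℝ)).add hintF).mono'
      ((measurable_abs.pow_const c).aestronglyMeasurable) (ae_of_all _ fun x => ?_)
    rw [Real.norm_eq_abs, abs_of_nonneg (by positivity)]
    exact habs_le c hc x
  have hFpow : ∀ c ≤ n, Integrable (fun x : ℝ => x ^ c) F := by
    intro c hc
    refine ((integrable_const (1 : ℝ)).add hintF).mono'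
      ((measurable_id'.pow_const c).aestronglyMeasurable) (ae_of_all _ fun x => ?_)
    rw [Real.norm_eq_abs, abs_pow]
    exact habs_le c hc x
  set Mo : ℕ → ℝ := fun c => ∫ x, x ^ c ∂F with hMo
  set Ab : ℕ → ℝ := fun c => ∫ x, |x| ^ c ∂F with hAb
  have hMo1 : Mo 1 = 0 := by rw [hMo]; simpa using hmean
  have hAb_nonneg : ∀ c, 0 ≤ Ab c := fun c => integral_nonneg fun x => by positivity
  have habsM : ∀ c, |Mo c| ≤ Ab c := by
    intro c
    calc |Mo c| = ‖∫ x, x ^ c ∂F‖ := (Real.norm_eq_abs _).symm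
      _ ≤ ∫ x, ‖x ^ c‖ ∂F := norm_integral_le_integral_norm _
      _ = Ab c := by
          simp only [hAb, Real.norm_eq_abs, abs_pow]
  have hAb2 : Ab 2 = Mo 2 := by
    simp only [hAb, hMo]
    exact integral_congr_ae (ae_of_all _ fun x => by show |x| ^ 2 = x ^ 2; rw [sq_abs])
  have hAbn : Ab n = Mo n := by
    simp only [hAb, hMo]
    exact integral_congr_ae (ae_of_all _ fun x => by
      show |x| ^ n = x ^ n
      exact Even.pow_abs ⟨q, by omega⟩ x)
  -- lintegral versions and interpolation
  set L : ℕ → ℝ≥0∞ := fun c => ∫⁻ x, (‖x‖₊ : ℝ≥0∞) ^ c ∂F with hL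
  have hLfin : ∀ c ≤ n, L c ≠ ⊤ := by
    intro c hc
    have h2 : ∫⁻ x, (‖(|x| ^ c : ℝ)‖₊ : ℝ≥0∞) ∂F < ⊤ := (hFabs c hc).2
    simp only [nnnorm_pow, Real.nnnorm_abs, ENNReal.coe_pow] at h2
    rw [hL]
    exact h2.ne
  have hLeq : ∀ c ≤ n, Ab c = (L c).toReal := by
    intro c hc
    simp only [hAb, hL]
    rw [integral_eq_lintegral_of_nonneg_ae (ae_of_all _ fun x => by positivity)
      ((measurable_abs.pow_const c).aestronglyMeasurable)]
    congr 1
    apply lintegral_congr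
    intro x
    rw [ENNReal.ofReal_pow (abs_nonneg x), ← Real.enorm_eq_ofReal_abs, enorm_eq_nnnorm]
  have hinterp : ∀ c, 2 ≤ c → c ≤ n → Ab c ^ (n - 2) ≤ Ab 2 ^ (n - c) * Ab n ^ (c - 2) := by
    intro c h2 hc
    have h := lint_interp F q c hq h2 (hn ▸ hc)
    rw [← hn] at h
    rw [hLeq c hc, hLeq 2 (by omega), hLeq n le_rfl, ← ENNReal.toReal_pow, ← ENNReal.toReal_pow,
      ← ENNReal.toReal_pow, ← ENNReal.toReal_mul]
    exact ENNReal.toReal_mono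
      (ENNReal.mul_ne_top (ENNReal.pow_ne_top (hLfin 2 (by omega)))
        (ENNReal.pow_ne_top (hLfin n le_rfl))) h
  set C : ℝ := (m : ℝ) ^ q * Ab 2 ^ q + (m : ℝ) * Ab n with hC
  have hC0 : 0 ≤ C := by
    rw [hC]
    have := hAb_nonneg 2; have := hAb_nonneg n
    positivity
  -- key per-term bound
  have hkey : ∀ (s : Finset (Fin m)) (c : Fin m → ℕ),
      (∀ i ∈ s, 2 ≤ c i) → (∀ i ∈ s, c i ≤ n) → (∑ i ∈ s, c i) = n →
      1 ≤ s.card → s.card ≤ q →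
      (m : ℝ) ^ s.card * ∏ i ∈ s, Ab (c i) ≤ C := by
    intro s c h2 hcn hsum hk1 hkq
    set k := s.card with hk
    refine le_of_pow_le_pow_left₀ (by omega : n - 2 ≠ 0) hC0 ?_
    have he1 : ∑ i ∈ s, (n - c i) = 2 * q * (k - 1) := by
      have h : (∑ i ∈ s, (n - c i)) + (∑ i ∈ s, c i) = ∑ i ∈ s, n := by
        rw [← Finset.sum_add_distrib]
        exact Finset.sum_congr rfl fun i hi => Nat.sub_add_cancel (hcn i hi)
      rw [hsum, Finset.sum_const, smul_eq_mul, hn] at h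
      zify [hk1]
      zify at h
      linear_combination h
    have he2 : ∑ i ∈ s, (c i - 2) = 2 * (q - k) := by
      have h : (∑ i ∈ s, (c i - 2)) + (∑ i ∈ s, 2) = ∑ i ∈ s, c i := by
        rw [← Finset.sum_add_distrib]
        exact Finset.sum_congr rfl fun i hi => Nat.sub_add_cancel (h2 i hi)
      rw [hsum, Finset.sum_const, smul_eq_mul, hn] at h
      zify [hkq]
      zify at h
      linear_combination h
    have em : k * (n - 2) = q * (2 * (k - 1)) + 2 * (q - k) := by
      rw [hn]
      zify [hk1, hkq, (by omega : 2 ≤ 2 * q)]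
      ring
    have ea : 2 * q * (k - 1) = q * (2 * (k - 1)) := by ring
    calc ((m : ℝ) ^ k * ∏ i ∈ s, Ab (c i)) ^ (n - 2)
        = (m : ℝ) ^ (k * (n - 2)) * ∏ i ∈ s, Ab (c i) ^ (n - 2) := by
          rw [mul_pow, ← pow_mul, ← Finset.prod_pow]
      _ ≤ (m : ℝ) ^ (k * (n - 2)) * ∏ i ∈ s, (Ab 2 ^ (n - c i) * Ab n ^ (c i - 2)) := by
          refine mul_le_mul_of_nonneg_left
            (Finset.prod_le_prod (fun i _ => pow_nonneg (hAb_nonneg _) _)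
              (fun i hi => hinterp (c i) (h2 i hi) (hcn i hi))) (by positivity)
      _ = (m : ℝ) ^ (k * (n - 2)) * (Ab 2 ^ (2 * q * (k - 1)) * Ab n ^ (2 * (q - k))) := by
          rw [Finset.prod_mul_distrib, Finset.prod_pow_eq_pow_sum, Finset.prod_pow_eq_pow_sum,
            he1, he2]
      _ = ((m : ℝ) ^ q * Ab 2 ^ q) ^ (2 * (k - 1)) * ((m : ℝ) * Ab n) ^ (2 * (q - k)) := by
          rw [em, ea, pow_add]; ring
      _ ≤ C ^ (2 * (k - 1)) * C ^ (2 * (q - k)) := by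
          have ha : 0 ≤ (m : ℝ) ^ q * Ab 2 ^ q :=
            mul_nonneg (pow_nonneg (Nat.cast_nonneg m) _) (pow_nonneg (hAb_nonneg 2) _)
          have hb : 0 ≤ (m : ℝ) * Ab n := mul_nonneg (Nat.cast_nonneg m) (hAb_nonneg n)
          exact mul_le_mul (pow_le_pow_left₀ ha (by rw [hC]; linarith) _)
            (pow_le_pow_left₀ hb (by rw [hC]; linarith) _)
            (pow_nonneg hb _) (pow_nonneg hC0 _)
      _ = C ^ (n - 2) := by rw [← pow_add]; congr 1; omega
  -- integrability of powers of Y over P and moments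
  have hcleG : ∀ (g : Fin n → Fin m) (i : Fin m),
      (Finset.univ.filter fun t => g t = i).card ≤ n := by
    intro g i
    calc (Finset.univ.filter fun t => g t = i).card
        ≤ (Finset.univ : Finset (Fin n)).card := Finset.card_filter_le _ _
      _ = n := by simp
  have hYint : ∀ (i : Fin m) (c : ℕ), c ≤ n → Integrable (fun ω => Y i ω ^ c) P := by
    intro i c hc
    have h1 : Integrable (fun x : ℝ => x ^ c) (Measure.map (Y i) P) := by
      rw [hmap i]; exact hFpow c hc
    have h2 := (integrable_map_measure ((measurable_id'.pow_const c).aestronglyMeasurable)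
      (hYm i).aemeasurable).mp h1
    exact h2
  have hYmom : ∀ (i : Fin m) (c : ℕ), ∫ ω, Y i ω ^ c ∂P = Mo c := by
    intro i c
    simp only [hMo]
    rw [← hmap i, integral_map (hYm i).aemeasurable
      ((measurable_id'.pow_const c).aestronglyMeasurable)]
  -- per-g integral computation
  have hgkey : ∀ g : Fin n → Fin m,
      Integrable (fun ω => ∏ t, Y (g t) ω) P ∧
        ∫ ω, ∏ t, Y (g t) ω ∂P =
          ∏ i ∈ Finset.image g Finset.univ, Mo ((Finset.univ.filter fun t => g t = i).card) := by
    intro g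
    set Z : Fin m → Ω → ℝ :=
      fun i ω => Y i ω ^ ((Finset.univ.filter fun t => g t = i).card) with hZ
    have hZmes : ∀ i, Measurable (Z i) := fun i => (hYm i).pow_const _
    have hZind : iIndepFun Z P :=
      hind.comp (fun i => fun y : ℝ => y ^ ((Finset.univ.filter fun t => g t = i).card))
        (fun i => measurable_id'.pow_const _)
    have hZint : ∀ i, Integrable (Z i) P := fun i => hYint i _ (hcleG g i)
    have hp := prod_integrable P Z hZmes hZind hZint (Finset.image g Finset.univ)
    have hrw : (fun ω => ∏ t, Y (g t) ω)
        = fun ω => ∏ i ∈ Finset.image g Finset.univ, Z i ω := by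
      funext ω
      exact Finset.prod_comp (fun i => Y i ω) g
    rw [hrw]
    exact ⟨hp.1, hp.2.trans (Finset.prod_congr rfl fun i _ => hYmom i _)⟩
  -- expansion of the power of the sum
  have hexp : ∀ ω : Ω, (∑ i, Y i ω) ^ n
      = ∑ g ∈ Fintype.piFinset (fun _ : Fin n => (Finset.univ : Finset (Fin m))),
          ∏ t, Y (g t) ω := by
    intro ω
    have h := Finset.prod_univ_sum (fun _ : Fin n => (Finset.univ : Finset (Fin m)))
      (fun _ i => Y i ω)
    rw [Finset.prod_const] at h
    simpa using h
  set G := Fintype.piFinset (fun _ : Fin n => (Finset.univ : Finset (Fin m))) with hG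
  set T : (Fin n → Fin m) → ℝ :=
    fun g => ∏ i ∈ Finset.image g Finset.univ,
      Mo ((Finset.univ.filter fun t => g t = i).card) with hT
  have hmain : ∫ ω, (∑ i, Y i ω) ^ n ∂P = ∑ g ∈ G, T g := by
    calc ∫ ω, (∑ i, Y i ω) ^ n ∂P = ∫ ω, ∑ g ∈ G, ∏ t, Y (g t) ω ∂P :=
          integral_congr_ae (ae_of_all _ fun ω => hexp ω)
      _ = ∑ g ∈ G, ∫ ω, ∏ t, Y (g t) ω ∂P := integral_finset_sum G fun g _ => (hgkey g).1
      _ = ∑ g ∈ G, T g := Finset.sum_congr rfl fun g _ => (hgkey g).2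
  -- fiberwise bound
  have hfib : ∀ s : Finset (Fin m),
      ∑ g ∈ G.filter (fun g => Finset.image g Finset.univ = s), |T g|
        ≤ if 1 ≤ s.card ∧ s.card ≤ q then (s.card : ℝ) ^ n * (C / (m : ℝ) ^ s.card) else 0 := by
    intro s
    have hcount : ∀ g : Fin n → Fin m, Finset.image g Finset.univ = s →
        (∑ i ∈ s, (Finset.univ.filter fun t => g t = i).card) = n := by
      intro g hg
      have h := Finset.card_eq_sum_card_image g (Finset.univ : Finset (Fin n))
      rw [hg] at h
      simpa using h.symm
    have hpos : ∀ (g : Fin n → Fin m), Finset.image g Finset.univ = s →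
        ∀ i ∈ s, 1 ≤ (Finset.univ.filter fun t => g t = i).card := by
      intro g hg i hi
      rw [← hg] at hi
      obtain ⟨t, -, ht⟩ := Finset.mem_image.mp hi
      exact Finset.card_pos.mpr ⟨t, Finset.mem_filter.mpr ⟨Finset.mem_univ t, ht⟩⟩
    by_cases hcard : 1 ≤ s.card ∧ s.card ≤ q
    · rw [if_pos hcard]
      have hone : ∀ g ∈ G.filter (fun g => Finset.image g Finset.univ = s),
          |T g| ≤ C / (m : ℝ) ^ s.card := by
        intro g hg
        obtain ⟨-, hgs⟩ := Finset.mem_filter.mp hg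
        by_cases h1 : ∃ i ∈ s, (Finset.univ.filter fun t => g t = i).card = 1
        · obtain ⟨i, hi, hci⟩ := h1
          have hTg : T g = 0 := by
            simp only [hT]
            refine Finset.prod_eq_zero (hgs.symm ▸ hi) ?_
            rw [hci, hMo1]
          rw [hTg, abs_zero]
          exact div_nonneg hC0 (by positivity)
        · push_neg at h1
          have h2 : ∀ i ∈ s, 2 ≤ (Finset.univ.filter fun t => g t = i).card := by
            intro i hi
            have ha := hpos g hgs i hi
            have hb := h1 i hi
            omega
          have hbd : (m : ℝ) ^ s.card *
              ∏ i ∈ s, Ab ((Finset.univ.filter fun t => g t = i).card) ≤ C :=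
            hkey s _ h2 (fun i _ => hcleG g i) (hcount g hgs) hcard.1 hcard.2
          have hTa : |T g| ≤ ∏ i ∈ s, Ab ((Finset.univ.filter fun t => g t = i).card) := by
            simp only [hT]
            rw [hgs]
            calc |∏ i ∈ s, Mo ((Finset.univ.filter fun t => g t = i).card)|
                = ∏ i ∈ s, |Mo ((Finset.univ.filter fun t => g t = i).card)| :=
                  Finset.abs_prod _ _
              _ ≤ _ := Finset.prod_le_prod (fun i _ => abs_nonneg _) (fun i _ => habsM _)
          rw [le_div_iff₀ (by positivity : (0:ℝ) < (m : ℝ) ^ s.card)]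
          calc |T g| * (m : ℝ) ^ s.card
              ≤ (∏ i ∈ s, Ab ((Finset.univ.filter fun t => g t = i).card)) * (m : ℝ) ^ s.card :=
                mul_le_mul_of_nonneg_right hTa (by positivity)
            _ = (m : ℝ) ^ s.card * ∏ i ∈ s, Ab ((Finset.univ.filter fun t => g t = i).card) :=
                mul_comm _ _
            _ ≤ C := hbd
      calc ∑ g ∈ G.filter (fun g => Finset.image g Finset.univ = s), |T g|
          ≤ (G.filter (fun g => Finset.image g Finset.univ = s)).card • (C / (m : ℝ) ^ s.card) :=
            Finset.sum_le_card_nsmul _ _ _ hone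
        _ ≤ (s.card ^ n) • (C / (m : ℝ) ^ s.card) := by
            refine nsmul_le_nsmul_left (div_nonneg hC0 (by positivity)) ?_
            calc (G.filter (fun g => Finset.image g Finset.univ = s)).card
                ≤ (Fintype.piFinset fun _ : Fin n => s).card := by
                  refine Finset.card_le_card fun g hg => ?_
                  obtain ⟨-, hgs⟩ := Finset.mem_filter.mp hg
                  rw [Fintype.mem_piFinset]
                  intro t
                  rw [← hgs]
                  exact Finset.mem_image_of_mem g (Finset.mem_univ t)
              _ = s.card ^ n := by simp
        _ = (s.card : ℝ) ^ n * (C / (m : ℝ) ^ s.card) := by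
            rw [nsmul_eq_mul]
            push_cast
            ring
    · rw [if_neg hcard]
      apply le_of_eq
      apply Finset.sum_eq_zero
      intro g hg
      obtain ⟨-, hgs⟩ := Finset.mem_filter.mp hg
      rcases Nat.eq_zero_or_pos s.card with h0 | h0
      · exfalso
        have hne : (Finset.image g Finset.univ).Nonempty :=
          ⟨g ⟨0, hn0⟩, Finset.mem_image_of_mem g (Finset.mem_univ _)⟩
        rw [hgs, Finset.card_eq_zero.mp h0] at hne
        exact Finset.not_nonempty_empty hne
      · have h1 : ∃ i ∈ s, (Finset.univ.filter fun t => g t = i).card = 1 := by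
          by_contra h1
          push_neg at h1
          have h2 : ∀ i ∈ s, 2 ≤ (Finset.univ.filter fun t => g t = i).card := by
            intro i hi
            have ha := hpos g hgs i hi
            have hb := h1 i hi
            omega
          have h3 : 2 * s.card ≤ ∑ i ∈ s, (Finset.univ.filter fun t => g t = i).card := by
            calc 2 * s.card = ∑ _i ∈ s, 2 := by rw [Finset.sum_const, smul_eq_mul, mul_comm]
              _ ≤ _ := Finset.sum_le_sum h2
          rw [hcount g hgs, hn] at h3
          omega
        obtain ⟨i, hi, hci⟩ := h1
        have hTg : T g = 0 := by
          simp only [hT]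
          refine Finset.prod_eq_zero (hgs.symm ▸ hi) ?_
          rw [hci, hMo1]
        rw [hTg, abs_zero]
  -- assemble the fiberwise decomposition
  have hsplit : ∑ g ∈ G, |T g|
      = ∑ s ∈ (Finset.univ : Finset (Fin m)).powerset,
          ∑ g ∈ G.filter (fun g => Finset.image g Finset.univ = s), |T g| :=
    (Finset.sum_fiberwise_of_maps_to (fun g _ => Finset.mem_powerset.mpr (Finset.subset_univ _))
      _).symm
  have hm' : (0 : ℝ) < (m : ℝ) := by exact_mod_cast hm
  have hsum_pow : ∑ s ∈ (Finset.univ : Finset (Fin m)).powerset,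
      (if 1 ≤ s.card ∧ s.card ≤ q then (s.card : ℝ) ^ n * (C / (m : ℝ) ^ s.card) else 0)
      ≤ (q : ℝ) ^ (n + 1) * C := by
    rw [Finset.sum_powerset]
    have hstep : ∀ j ∈ Finset.range ((Finset.univ : Finset (Fin m)).card + 1),
        (∑ s ∈ Finset.powersetCard j (Finset.univ : Finset (Fin m)),
          (if 1 ≤ s.card ∧ s.card ≤ q then (s.card : ℝ) ^ n * (C / (m : ℝ) ^ s.card) else 0))
        ≤ if 1 ≤ j ∧ j ≤ q then (q : ℝ) ^ n * C else 0 := by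
      intro j hj
      have hcardeq : ∀ s ∈ Finset.powersetCard j (Finset.univ : Finset (Fin m)), s.card = j :=
        fun s hs => (Finset.mem_powersetCard.mp hs).2
      by_cases hjq : 1 ≤ j ∧ j ≤ q
      · rw [if_pos hjq]
        calc (∑ s ∈ Finset.powersetCard j (Finset.univ : Finset (Fin m)),
              (if 1 ≤ s.card ∧ s.card ≤ q then (s.card : ℝ) ^ n * (C / (m : ℝ) ^ s.card) else 0))
            = ∑ _s ∈ Finset.powersetCard j (Finset.univ : Finset (Fin m)),
                (j : ℝ) ^ n * (C / (m : ℝ) ^ j) :=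
              Finset.sum_congr rfl fun s hs => by rw [hcardeq s hs, if_pos hjq]
          _ = ((Finset.powersetCard j (Finset.univ : Finset (Fin m))).card : ℝ) *
                ((j : ℝ) ^ n * (C / (m : ℝ) ^ j)) := by
              rw [Finset.sum_const, nsmul_eq_mul]
          _ ≤ ((m : ℝ) ^ j) * ((q : ℝ) ^ n * (C / (m : ℝ) ^ j)) := by
              refine mul_le_mul ?_ ?_
                (mul_nonneg (by positivity) (div_nonneg hC0 (by positivity))) (by positivity)
              · rw [Finset.card_powersetCard]
                simp only [Finset.card_univ, Fintype.card_fin]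
                exact_mod_cast Nat.choose_le_pow m j
              · exact mul_le_mul_of_nonneg_right
                  (pow_le_pow_left₀ (by positivity) (by exact_mod_cast hjq.2) n)
                  (div_nonneg hC0 (by positivity))
          _ = (q : ℝ) ^ n * C := by
              field_simp
      · rw [if_neg hjq]
        apply le_of_eq
        apply Finset.sum_eq_zero
        intro s hs
        rw [hcardeq s hs, if_neg hjq]
    calc ∑ j ∈ Finset.range ((Finset.univ : Finset (Fin m)).card + 1),
          (∑ s ∈ Finset.powersetCard j (Finset.univ : Finset (Fin m)),
            (if 1 ≤ s.card ∧ s.card ≤ q then (s.card : ℝ) ^ n * (C / (m : ℝ) ^ s.card) else 0))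
        ≤ ∑ j ∈ Finset.range ((Finset.univ : Finset (Fin m)).card + 1),
            (if 1 ≤ j ∧ j ≤ q then (q : ℝ) ^ n * C else 0) := Finset.sum_le_sum hstep
      _ = ∑ _j ∈ (Finset.range ((Finset.univ : Finset (Fin m)).card + 1)).filter
            (fun j => 1 ≤ j ∧ j ≤ q), (q : ℝ) ^ n * C := (Finset.sum_filter _ _).symm
      _ = (((Finset.range ((Finset.univ : Finset (Fin m)).card + 1)).filter
            (fun j => 1 ≤ j ∧ j ≤ q)).card : ℝ) * ((q : ℝ) ^ n * C) := by
          rw [Finset.sum_const, nsmul_eq_mul]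
      _ ≤ (q : ℝ) * ((q : ℝ) ^ n * C) := by
          refine mul_le_mul_of_nonneg_right ?_ (mul_nonneg (by positivity) hC0)
          have hsub : (Finset.range ((Finset.univ : Finset (Fin m)).card + 1)).filter
              (fun j => 1 ≤ j ∧ j ≤ q) ⊆ Finset.Icc 1 q := by
            intro j hj
            exact Finset.mem_Icc.mpr (Finset.mem_filter.mp hj).2
          calc ((((Finset.range ((Finset.univ : Finset (Fin m)).card + 1)).filter
                (fun j => 1 ≤ j ∧ j ≤ q)).card : ℕ) : ℝ)
              ≤ (((Finset.Icc 1 q).card : ℕ) : ℝ) := by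
                exact_mod_cast Finset.card_le_card hsub
            _ = (q : ℝ) := by rw [Nat.card_Icc]; simp
      _ = (q : ℝ) ^ (n + 1) * C := by rw [pow_succ]; ring
  -- final chain
  calc ∫ ω, (∑ i, Y i ω) ^ n ∂P = ∑ g ∈ G, T g := hmain
    _ ≤ ∑ g ∈ G, |T g| := Finset.sum_le_sum fun g _ => le_abs_self _
    _ = ∑ s ∈ (Finset.univ : Finset (Fin m)).powerset,
          ∑ g ∈ G.filter (fun g => Finset.image g Finset.univ = s), |T g| := hsplit
    _ ≤ ∑ s ∈ (Finset.univ : Finset (Fin m)).powerset,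
          (if 1 ≤ s.card ∧ s.card ≤ q then (s.card : ℝ) ^ n * (C / (m : ℝ) ^ s.card) else 0) :=
        Finset.sum_le_sum fun s _ => hfib s
    _ ≤ (q : ℝ) ^ (n + 1) * C := hsum_pow
    _ = (q : ℝ) ^ (n + 1) * (m : ℝ) ^ q * (∫ x, x ^ 2 ∂F) ^ q
          + (q : ℝ) ^ (n + 1) * (m : ℝ) * ∫ x, x ^ n ∂F := by
        rw [hC, hAb2, hAbn]
        simp only [hMo]
        ring
end

section
/- Let q > 1 be an integer, θ ≥ 1 a real number, t ≥ 2 an integer, and set r = 1 − 1/(2q) and β_0 = 1. If real numbers β_1, …, β_t satisfy the system of linear equations (1 − 2(β_i − β_{i+1}) − (1 − β_i)/q)/(2 + θ) = ((q−1)/q) · (1 − β_t)/θ for all i = 0, 1, …, t−1, then β_i = 1 − qθ(1 − r^i)/( θ + (q−1)(2+θ)(1 − r^t) ) for all i = 1, …, t. -/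
/-- **Solution of the renormalization system** (Lemma 6.3). If `β_0 = 1` and
`β_1, …, β_t` solve the linear system
`(1 - 2(β_i - β_{i+1}) - (1-β_i)/q)/(2+θ) = ((q-1)/q)·(1-β_t)/θ` for `i = 0, …, t-1`,
then `β_i = 1 - qθ(1-r^i)/(θ + (q-1)(2+θ)(1-r^t))` where `r = 1 - 1/(2q)`. -/
theorem stmt18 (q : ℕ) (hq : 1 < q) (θ : ℝ) (hθ : 1 ≤ θ) (t : ℕ) (ht : 2 ≤ t)
    (β : ℕ → ℝ) (hβ0 : β 0 = 1)
    (hsys : ∀ i < t,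
      (1 - 2 * (β i - β (i + 1)) - (1 - β i) / (q : ℝ)) / (2 + θ) =
        ((q : ℝ) - 1) / (q : ℝ) * ((1 - β t) / θ)) :
    ∀ i, 1 ≤ i → i ≤ t →
      β i = 1 - (q : ℝ) * θ * (1 - (1 - 1 / (2 * (q : ℝ))) ^ i) /
        (θ + ((q : ℝ) - 1) * (2 + θ) * (1 - (1 - 1 / (2 * (q : ℝ))) ^ t)) := by
  set Q : ℝ := (q : ℝ) with hQdef
  have hQ2 : (2 : ℝ) ≤ Q := by
    have h2q : (2 : ℕ) ≤ q := hq
    rw [hQdef]; exact_mod_cast h2q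
  have hQ0 : Q ≠ 0 := by linarith
  have hθ0 : θ ≠ 0 := by linarith
  have h2θ : (2 : ℝ) + θ ≠ 0 := by linarith
  set r : ℝ := 1 - 1 / (2 * Q) with hrdef
  have hr0 : 0 < r := by
    have : 1 / (2 * Q) ≤ 1 / 4 := by
      apply one_div_le_one_div_of_le <;> linarith
    rw [hrdef]; linarith
  have hr1 : r < 1 := by
    have : 0 < 1 / (2 * Q) := by positivity
    rw [hrdef]; linarith
  have hXt : 0 < 1 - r ^ t := by
    have : r ^ t < 1 := pow_lt_one₀ hr0.le hr1 (by omega)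
    linarith
  set D : ℝ := θ + (Q - 1) * (2 + θ) * (1 - r ^ t) with hDdef
  have hD0 : 0 < D := by
    have : 0 < (Q - 1) * (2 + θ) * (1 - r ^ t) := by
      apply mul_pos
      · apply mul_pos <;> linarith
      · exact hXt
    rw [hDdef]; linarith
  set c : ℝ := (Q - 1) / Q * ((1 - β t) / θ) with hcdef
  set A : ℝ := Q * (1 - (2 + θ) * c) with hAdef
  -- denominator-cleared identities
  have hr' : 2 * Q * r = 2 * Q - 1 := by rw [hrdef]; field_simp
  have hAq : A = Q - Q * (2 + θ) * c := by rw [hAdef]; ring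
  have hA'' : 2 * A * (1 - r) = 1 - (2 + θ) * c := by
    rw [hAdef, hrdef]; field_simp; ring
  have hc2 : c * Q * θ = (Q - 1) * (1 - β t) := by rw [hcdef]; field_simp
  -- key induction
  have key : ∀ i, i ≤ t → 1 - β i = A * (1 - r ^ i) := by
    intro i
    induction i with
    | zero => intro _; simp [hβ0]
    | succ n ih =>
      intro hn
      have hnt : n < t := by omega
      have hb := (div_eq_iff h2θ).mp (hsys n hnt)
      have ihh := ih (by omega)
      have hb2 : Q * (1 - 2 * (β n - β (n + 1))) - (1 - β n) = c * (2 + θ) * Q := by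
        field_simp at hb
        linear_combination hb
      have hrec : 2 * Q * (1 - β (n + 1)) = 2 * Q * r * (1 - β n) + Q * (1 - c * (2 + θ)) := by
        linear_combination (-1 : ℝ) * hb2 - (1 - β n) * hr'
      have goal2 : 2 * Q * (1 - β (n + 1)) = 2 * Q * (A * (1 - r ^ n * r)) := by
        linear_combination hrec + 2 * Q * r * ihh - Q * hA''
      have h2Q0 : (2 : ℝ) * Q ≠ 0 := by positivity
      have := mul_left_cancel₀ h2Q0 goal2
      rw [pow_succ]
      linarith
  -- determine 1 - β t
  have kt := key t le_rfl
  have hβt' : (1 - β t) * D = Q * θ * (1 - r ^ t) := by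
    rw [hDdef]
    linear_combination θ * kt + (1 - r ^ t) * θ * hAq - (2 + θ) * (1 - r ^ t) * hc2
  have hA2' : A * D * θ = Q * θ * θ := by
    linear_combination θ * D * hAq - (2 + θ) * D * hc2 - (2 + θ) * (Q - 1) * hβt'
      + Q * θ * hDdef
  -- conclude
  intro i _ hit
  have hk := key i hit
  have hXiD : (1 - β i) * D * θ = Q * θ * (1 - r ^ i) * θ := by
    linear_combination D * θ * hk + (1 - r ^ i) * hA2'
  have hclean : (1 - β i) * D = Q * θ * (1 - r ^ i) := by
    apply mul_right_cancel₀ hθ0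
    linear_combination hXiD
  field_simp
  linear_combination -hclean
end
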